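/- Let B₀ be the ℍ-valued 1-form on ℝ⁴ ≅ ℍ defined by B₀(x)(u) = Im(x·ū)/(1 + |x|²) for x, u ∈ ℍ. Then B₀ is smooth and its curvature F = dB₀ + B₀∧B₀ is given by F(x)(u, v) = (u·v̄ − v·ū)/(1 + |x|²)² for all x, u, v ∈ ℍ. -/

import Mathlib

/- STATEMENT 11: The standard ASD connection matrix B₀(x)(u) = Im(x·ū)/(1+|x|²) on
ℝ⁴ ≅ ℍ is smooth, with curvature F = dB₀ + B₀∧B₀ given by
F(x)(u,v) = (u·v̄ − v·ū)/(1+|x|²)². -/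

open Quaternion

noncomputable section

/-- The standard ASD instanton connection form on ℝ⁴ ≅ ℍ. -/
def B0 : ℍ[ℝ] → ℍ[ℝ] → ℍ[ℝ] := fun x u => ((1 + ‖x‖ ^ 2)⁻¹ : ℝ) • (x * star u).im

namespace B0Aux

/-- `Quaternion.im` as a linear map. -/
def imLM : ℍ[ℝ] →ₗ[ℝ] ℍ[ℝ] where
  toFun := Quaternion.im
  map_add' a b := by ext <;> simp
  map_smul' r a := by ext <;> simp

/-- `star` as a linear map. -/
def starLM : ℍ[ℝ] →ₗ[ℝ] ℍ[ℝ] where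
  toFun := star
  map_add' := star_add
  map_smul' r a := by ext <;> simp

def starCLM : ℍ[ℝ] →L[ℝ] ℍ[ℝ] := LinearMap.toContinuousLinearMap starLM

def imCLM : ℍ[ℝ] →L[ℝ] ℍ[ℝ] := LinearMap.toContinuousLinearMap imLM

@[simp] lemma starCLM_apply (q : ℍ[ℝ]) : starCLM q = star q := rfl
@[simp] lemma imCLM_apply (q : ℍ[ℝ]) : imCLM q = q.im := rfl

/-- `y ↦ (y * star v).im` as a continuous linear map. -/
def mv (v : ℍ[ℝ]) : ℍ[ℝ] →L[ℝ] ℍ[ℝ] :=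
  imCLM.comp ((ContinuousLinearMap.mul ℝ ℍ[ℝ]).flip (star v))

@[simp] lemma mv_apply (v y : ℍ[ℝ]) : mv v y = (y * star v).im := rfl

lemma fderiv_B0_apply (v x u : ℍ[ℝ]) :
    fderiv ℝ (fun y => B0 y v) x u =
      ((1 + ‖x‖ ^ 2)⁻¹ : ℝ) • (u * star v).im
        - ((2 * (inner ℝ x u)) * (((1 + ‖x‖ ^ 2) ^ 2)⁻¹ : ℝ)) • (x * star v).im := by
  have hs : (1 + ‖x‖ ^ 2 : ℝ) ≠ 0 := by positivity
  have hg : HasFDerivAt (fun y : ℍ[ℝ] => 1 + ‖y‖ ^ 2)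
      (2 • (innerSL ℝ x).comp (ContinuousLinearMap.id ℝ ℍ[ℝ])) x :=
    ((hasFDerivAt_id x).norm_sq).const_add 1
  have hc := HasFDerivAt.comp x (hasFDerivAt_inv hs) hg
  have hm : HasFDerivAt (fun y => mv v y) (mv v) x := (mv v).hasFDerivAt
  have h := hc.smul hm
  have heq : (((fun t : ℝ => t⁻¹) ∘ fun y : ℍ[ℝ] => 1 + ‖y‖ ^ 2) • fun y => mv v y)
      = fun y => B0 y v := by
    funext y; simp [B0, mv_apply]
  rw [heq] at h
  rw [h.fderiv]
  simp [mv_apply, sub_eq_add_neg, mul_assoc]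

set_option maxHeartbeats 1000000 in
lemma key (x u v : ℍ[ℝ]) :
    (1 + ‖x‖ ^ 2) • ((u * star v).im - (v * star u).im)
      - (2 * (inner ℝ x u)) • (x * star v).im + (2 * (inner ℝ x v)) • (x * star u).im
      + ((x * star u).im * (x * star v).im - (x * star v).im * (x * star u).im)
    = u * star v - v * star u := by
  have hn : ‖x‖ ^ 2 = x.re^2 + x.imI^2 + x.imJ^2 + x.imK^2 := by
    rw [sq, ← normSq_eq_norm_mul_self, normSq_def']
  have hi : ∀ a b : ℍ[ℝ], inner ℝ a b = (a * star b).re := fun a b => inner_def a b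
  rw [hn]
  simp only [hi]
  ext <;>
    simp only [Quaternion.re_add, Quaternion.imI_add, Quaternion.imJ_add, Quaternion.imK_add,
      Quaternion.re_sub, Quaternion.imI_sub, Quaternion.imJ_sub, Quaternion.imK_sub,
      Quaternion.re_smul, Quaternion.imI_smul, Quaternion.imJ_smul, Quaternion.imK_smul,
      Quaternion.re_mul, Quaternion.imI_mul, Quaternion.imJ_mul, Quaternion.imK_mul,
      Quaternion.re_star, Quaternion.imI_star, Quaternion.imJ_star, Quaternion.imK_star,
      Quaternion.re_im, Quaternion.imI_im, Quaternion.imJ_im, Quaternion.imK_im,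
      smul_eq_mul] <;>
    ring

end B0Aux

theorem B0_smooth_and_curvature :
    ContDiff ℝ (⊤ : ℕ∞) (fun p : ℍ[ℝ] × ℍ[ℝ] => B0 p.1 p.2) ∧
    ∀ x u v : ℍ[ℝ],
      (fderiv ℝ (fun y => B0 y v) x u - fderiv ℝ (fun y => B0 y u) x v) +
          (B0 x u * B0 x v - B0 x v * B0 x u) =
        (((1 + ‖x‖ ^ 2) ^ 2)⁻¹ : ℝ) • (u * star v - v * star u) := by
  constructor
  · have h1 : ContDiff ℝ (⊤ : ℕ∞) (fun p : ℍ[ℝ] × ℍ[ℝ] => ((1 + ‖p.1‖ ^ 2)⁻¹ : ℝ)) :=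
      (contDiff_const.add (contDiff_fst.norm_sq ℝ)).inv (fun p => by positivity)
    have h2 : ContDiff ℝ (⊤ : ℕ∞) (fun p : ℍ[ℝ] × ℍ[ℝ] => (p.1 * star p.2).im) := by
      have := (B0Aux.imCLM.contDiff (n := (⊤ : ℕ∞))).comp
        ((contDiff_fst (𝕜 := ℝ) (E := ℍ[ℝ]) (F := ℍ[ℝ])).mul
          ((B0Aux.starCLM.contDiff).comp contDiff_snd))
      simpa [Function.comp_def] using this
    exact h1.smul h2
  · intro x u v
    have hs : (1 + ‖x‖ ^ 2 : ℝ) ≠ 0 := by positivity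
    rw [B0Aux.fderiv_B0_apply, B0Aux.fderiv_B0_apply, ← B0Aux.key x u v]
    simp only [B0, smul_mul_assoc, mul_smul_comm, smul_smul]
    match_scalars <;> field_simp <;> ring
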